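/- For every real constant h, the function U(ξ) = 4 arctan(h e^{−ξ} + √(h² e^{−2ξ} + 1)) satisfies U'(ξ) = sin U(ξ) for all ξ ∈ ℝ (the case γ = 0). -/

import Mathlib

open Real

lemma sin_four_arctan (t : ℝ) :
    Real.sin (4 * Real.arctan t) = 4 * t * (1 - t ^ 2) / (1 + t ^ 2) ^ 2 := by
  have h1 : (0:ℝ) < 1 + t ^ 2 := by positivity
  have hs : Real.sqrt (1 + t ^ 2) ^ 2 = 1 + t ^ 2 := Real.sq_sqrt h1.le
  have hs0 : Real.sqrt (1 + t ^ 2) ≠ 0 := by positivity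
  rw [show (4:ℝ) * Real.arctan t = 2 * (2 * Real.arctan t) by ring,
    Real.sin_two_mul, Real.cos_two_mul, Real.sin_two_mul, Real.sin_arctan,
    Real.cos_arctan]
  rw [div_pow, one_pow]
  field_simp
  ring_nf
  rw [show Real.sqrt (1 + t ^ 2) ^ 4 = (Real.sqrt (1 + t ^ 2) ^ 2) ^ 2 by ring, hs]
  ring

/-- For every real h, the function
U(ξ) = 4 arctan(h e^{−ξ} + √(h² e^{−2ξ} + 1)) satisfies U' = sin U on ℝ (case γ = 0). -/
theorem stmt12 (h : ℝ) (U : ℝ → ℝ)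
    (hU : ∀ ξ : ℝ, U ξ = 4 * Real.arctan
      (h * Real.exp (-ξ) + Real.sqrt (h ^ 2 * Real.exp (-2 * ξ) + 1))) :
    ∀ ξ : ℝ, HasDerivAt U (Real.sin (U ξ)) ξ := by
  intro ξ
  set a : ℝ := h * Real.exp (-ξ) with ha
  set s : ℝ := Real.sqrt (h ^ 2 * Real.exp (-2 * ξ) + 1) with hsdef
  have hpos : (0:ℝ) < h ^ 2 * Real.exp (-2 * ξ) + 1 := by positivity
  have hs2 : s ^ 2 = h ^ 2 * Real.exp (-2 * ξ) + 1 := Real.sq_sqrt hpos.le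
  have hs0 : (0:ℝ) < s := Real.sqrt_pos.mpr hpos
  have he2 : Real.exp (-2 * ξ) = Real.exp (-ξ) ^ 2 := by
    rw [← Real.exp_nat_mul]; ring_nf
  have hsa : s ^ 2 = a ^ 2 + 1 := by rw [hs2, he2]; ring
  -- derivatives
  have d1 : HasDerivAt (fun x : ℝ => h * Real.exp (-x)) (-a) ξ := by
    have := ((Real.hasDerivAt_exp (-ξ)).comp ξ ((hasDerivAt_id ξ).neg)).const_mul h
    simpa [ha, mul_comm] using this
  have d2 : HasDerivAt (fun x : ℝ => h ^ 2 * Real.exp (-2 * x) + 1)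
      (-2 * (h ^ 2 * Real.exp (-2 * ξ))) ξ := by
    have := (((Real.hasDerivAt_exp (-2 * ξ)).comp ξ
      ((hasDerivAt_id ξ).const_mul (-2))).const_mul (h ^ 2)).add_const 1
    simpa [mul_comm, mul_assoc, mul_left_comm] using this
  have d3 : HasDerivAt (fun x : ℝ => Real.sqrt (h ^ 2 * Real.exp (-2 * x) + 1))
      (-2 * (h ^ 2 * Real.exp (-2 * ξ)) / (2 * s)) ξ :=
    d2.sqrt (ne_of_gt hpos)
  have d4 : HasDerivAt (fun x : ℝ =>
      h * Real.exp (-x) + Real.sqrt (h ^ 2 * Real.exp (-2 * x) + 1))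
      (-a + -2 * (h ^ 2 * Real.exp (-2 * ξ)) / (2 * s)) ξ := d1.add d3
  have d5 : HasDerivAt (fun x : ℝ => 4 * Real.arctan
      (h * Real.exp (-x) + Real.sqrt (h ^ 2 * Real.exp (-2 * x) + 1)))
      (4 * ((1 + (a + s) ^ 2)⁻¹ * (-a + -2 * (h ^ 2 * Real.exp (-2 * ξ)) / (2 * s)))) ξ := by
    simpa [ha, hsdef] using (d4.arctan).const_mul 4
  have d6 : HasDerivAt U
      (4 * ((1 + (a + s) ^ 2)⁻¹ * (-a + -2 * (h ^ 2 * Real.exp (-2 * ξ)) / (2 * s)))) ξ :=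
    d5.congr_of_eventuallyEq (Filter.Eventually.of_forall hU)
  convert d6 using 1
  rw [hU ξ, sin_four_arctan, ← hsdef, ← ha]
  have he : h ^ 2 * Real.exp (-2 * ξ) = a ^ 2 := by rw [he2, ha]; ring
  rw [he]
  have hg : (0:ℝ) < a + s := by nlinarith [hsa, hs0, sq_nonneg (s + a)]
  have h1 : 1 + (a + s) ^ 2 = 2 * s * (a + s) := by linear_combination -hsa
  have h2 : 1 - (a + s) ^ 2 = -2 * a * (a + s) := by linear_combination -hsa
  rw [h1, h2]
  field_simp
  ring
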